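/- For every n ≥ 6, every deterministic algorithm A, every Round Robin scheduler, and every choice of the adversary, if the execution of A from the initial configuration in which all n vertices of the n-ring are occupied by exactly one robot each reaches a configuration in which all robots occupy one common vertex, then at least ⌊n/2⌋ epochs elapse before this happens. Consequently, any gathering algorithm on rings requires at least ⌊n/2⌋ epochs in the worst case, so an algorithm gathering within at most n−3 epochs is asymptotically time optimal. -/

import Mathlib

/-!
Robots on an anonymous `n`-ring (the cycle on `ZMod n`).  A configuration of `k`
robots is a function `Fin k → ZMod n` (several robots may share a vertex: a
multiplicity).  Robots are anonymous, oblivious and disoriented: an algorithm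
only sees the set of occupied vertices expressed as offsets in the robot's own
local frame, whose orientation (reflection) is chosen by the adversary at each
activation.  A sequential scheduler activates one robot per round.
-/

namespace RobotRing

/-- A configuration of `k` robots on the `n`-ring: robot `i` sits on vertex `C i`. -/
abbrev Config (n k : ℕ) := Fin k → ZMod n

/-- The set of occupied vertices of a configuration. -/
def occ {n k : ℕ} (C : Config n k) : Set (ZMod n) := Set.range C

/-- A boolean orientation viewed as the ring element `±1`. -/
def sgn {n : ℕ} (e : Bool) : ZMod n := if e then 1 else -1

/-- The local view of a robot located at `p` whose local frame has orientation `e`: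
the occupied vertices, expressed as offsets in the robot's local frame
(robots cannot detect multiplicities, and perceive positions only relative to
themselves, up to reflection). -/
def view {n k : ℕ} (C : Config n k) (p : ZMod n) (e : Bool) : Set (ZMod n) :=
  {d : ZMod n | p + sgn e * d ∈ occ C}

/-- A deterministic algorithm: to every local view it assigns a move,
`0` = stay still (nil), `±1` = move to an adjacent vertex, in the local frame. -/
abbrev Algo (n : ℕ) := Set (ZMod n) → SignType

/-- One activation: robot `i` is activated, the adversary chooses the orientation
`e` of its local frame (robots are disoriented and chirality-free, so a
reflection-ambiguous move direction is resolved by the adversary), and the robot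
moves instantaneously as the algorithm prescribes on its view. -/
def step {n k : ℕ} (A : Algo n) (C : Config n k) (i : Fin k) (e : Bool) : Config n k :=
  Function.update C i (C i + sgn e * (SignType.cast (A (view C (C i) e)) : ZMod n))

/-- The execution of algorithm `A` from the initial configuration `C₀` under the
sequential scheduler `sched` (one robot per round) and the adversarial
orientation choices `env`. -/
def exec {n k : ℕ} (A : Algo n) (C₀ : Config n k) (sched : ℕ → Fin k) (env : ℕ → Bool) :
    ℕ → Config n k
  | 0 => C₀
  | t + 1 => step A (exec A C₀ sched env t) (sched t) (env t)

/-- Fairness of a sequential (SEQ) scheduler: every robot is activated infinitely often. -/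
def Fair {k : ℕ} (sched : ℕ → Fin k) : Prop :=
  ∀ (i : Fin k) (t : ℕ), ∃ t' ≥ t, sched t' = i

/-- A Round Robin scheduler: the `k` robots are activated one per round in a fixed
order which repeats forever (each robot is activated exactly once per epoch of
`k` consecutive rounds). -/
def IsRoundRobin {k : ℕ} (sched : ℕ → Fin k) : Prop :=
  ∃ π : Equiv.Perm (Fin k), ∀ (t : ℕ) (h : t % k < k), sched t = π ⟨t % k, h⟩

/-- The execution `E` solves Gathering: after finitely many rounds all robots
occupy one common vertex and no robot ever moves afterwards. -/
def Solves {n k : ℕ} (E : ℕ → Config n k) : Prop :=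
  ∃ T : ℕ, ∀ t ≥ T, (∀ i j : Fin k, E t i = E t j) ∧ E (t + 1) = E t

/-- The ring distance between two vertices of the `n`-ring. -/
def ringDist {n : ℕ} (a b : ZMod n) : ℕ := min (a - b).val (b - a).val

/-- for every `n ≥ 6`, every deterministic algorithm `A`, every
Round Robin scheduler and every choice of the adversary, if the execution of `A`
from the initial configuration in which all `n` vertices of the `n`-ring are
occupied by exactly one robot each reaches, at round `t`, a configuration where
all robots occupy one common vertex, then at least `⌊n/2⌋` epochs (of `n` rounds
each) elapse before this happens, i.e. `t` lies strictly beyond the first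
`⌊n/2⌋ - 1` complete epochs.  Hence any gathering algorithm on rings requires at
least `⌊n/2⌋` epochs in the worst case, so gathering within `n - 3` epochs is
asymptotically time optimal. -/
lemma ringDist_add_one {n : ℕ} (hn : 1 < n) (a b : ZMod n) :
    ringDist a (b + 1) ≤ ringDist a b + 1 := by
  haveI : NeZero n := ⟨by omega⟩
  haveI : Fact (1 < n) := ⟨hn⟩
  have h1 : ((1 : ZMod n)).val = 1 := ZMod.val_one n
  by_cases h : a = b
  · subst h
    have e1 : a - (a + 1) = -1 := by ring
    have e2 : a + 1 - a = 1 := by ring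
    have h10 : (1 : ZMod n) ≠ 0 := by intro h0; rw [h0] at h1; simp at h1
    have hneg : ((-1 : ZMod n)).val = n - 1 := by rw [ZMod.neg_val, if_neg h10, h1]
    simp [ringDist, e1, e2, h1, hneg, sub_self]
  · have hx' : a - b ≠ 0 := sub_ne_zero.mpr h
    have hx : (a - b).val ≠ 0 := fun h0 => hx' ((ZMod.val_eq_zero _).mp h0)
    have hxlt : (a - b).val < n := ZMod.val_lt _
    have h10 : (1 : ZMod n) ≠ 0 := by intro h0; rw [h0] at h1; simp at h1
    have hneg1 : ((-1 : ZMod n)).val = n - 1 := by rw [ZMod.neg_val, if_neg h10, h1]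
    have e1 : a - (b + 1) = (a - b) + (-1) := by ring
    have e2 : b + 1 - a = (b - a) + 1 := by ring
    have v1 : (a - (b + 1)).val = ((a - b).val + (n - 1)) % n := by
      rw [e1, ZMod.val_add, hneg1]
    have v1' : (a - (b + 1)).val = (a - b).val - 1 := by
      rw [v1, Nat.mod_eq_sub_mod (by omega), show (a - b).val + (n - 1) - n = (a-b).val - 1 by omega,
        Nat.mod_eq_of_lt (by omega)]
    have v2 : (b + 1 - a).val ≤ (b - a).val + 1 := by
      rw [e2, ZMod.val_add, h1]; exact Nat.mod_le _ _
    unfold ringDist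
    omega

lemma ringDist_neg {n : ℕ} (a b : ZMod n) : ringDist (-a) (-b) = ringDist a b := by
  unfold ringDist
  rw [show -a - -b = b - a by ring, show -b - -a = a - b by ring, Nat.min_comm]

lemma ringDist_sub_one {n : ℕ} (hn : 1 < n) (a b : ZMod n) :
    ringDist a (b - 1) ≤ ringDist a b + 1 := by
  have := ringDist_add_one hn (-a) (-b)
  rw [ringDist_neg] at *
  calc ringDist a (b - 1) = ringDist (-a) (-(b-1)) := (ringDist_neg _ _).symm
    _ = ringDist (-a) (-b + 1) := by ring_nf
    _ ≤ ringDist (-a) (-b) + 1 := ringDist_add_one hn _ _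
    _ = ringDist a b + 1 := by rw [ringDist_neg]


lemma ringDist_step {n : ℕ} (hn : 1 < n) (a b : ZMod n) (e : Bool) (s : SignType) :
    ringDist a (b + sgn e * (SignType.cast s : ZMod n)) ≤ ringDist a b + 1 := by
  cases s <;> cases e <;>
    simp only [sgn, SignType.cast, if_true, if_false,
      mul_zero, mul_one, mul_neg, one_mul, neg_one_mul, neg_neg, add_zero, Bool.false_eq_true] <;>
    first
      | exact Nat.le_succ_of_le le_rfl
      | simpa [sub_eq_add_neg] using ringDist_sub_one hn a b
      | exact ringDist_add_one hn a b

lemma exec_dist {n k : ℕ} (hn : 1 < n) (A : Algo n) (C₀ : Config n k)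
    (sched : ℕ → Fin k) (env : ℕ → Bool) (i : Fin k) (t : ℕ) :
    ringDist (C₀ i) (exec A C₀ sched env t i) ≤
      ((Finset.range t).filter (fun s => sched s = i)).card := by
  induction t with
  | zero => simp [exec, ringDist, sub_self]
  | succ t ih =>
      rw [Finset.range_add_one, Finset.filter_insert]
      by_cases h : sched t = i
      · rw [if_pos h]
        rw [Finset.card_insert_of_notMem (by simp)]
        have : exec A C₀ sched env (t+1) i =
            exec A C₀ sched env t i + sgn (env t) *
              (SignType.cast (A (view (exec A C₀ sched env t)
                (exec A C₀ sched env t (sched t)) (env t))) : ZMod n) := by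
          show step A _ (sched t) (env t) i = _
          rw [step, h, Function.update_self]
        rw [this, h]
        exact le_trans (ringDist_step hn _ _ _ _) (by omega)
      · rw [if_neg h]
        have : exec A C₀ sched env (t+1) i = exec A C₀ sched env t i := by
          show step A _ (sched t) (env t) i = _
          rw [step, Function.update_of_ne (fun hh => h hh.symm)]
        rw [this]; exact ih

lemma count_le {k : ℕ} (hk : 0 < k) (sched : ℕ → Fin k) (π : Equiv.Perm (Fin k))
    (hπ : ∀ (t : ℕ) (h : t % k < k), sched t = π ⟨t % k, h⟩) (i : Fin k) (M t : ℕ)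
    (ht : t ≤ M * k) :
    ((Finset.range t).filter (fun s => sched s = i)).card ≤ M := by
  have key : ∀ s, sched s = i ↔ s % k = ((π.symm i : Fin k) : ℕ) := by
    intro s
    rw [hπ s (Nat.mod_lt s hk)]
    constructor
    · intro h
      have : (⟨s % k, Nat.mod_lt s hk⟩ : Fin k) = π.symm i := by
        apply π.injective; simp [h]
      exact congrArg Fin.val this
    · intro h
      have : (⟨s % k, Nat.mod_lt s hk⟩ : Fin k) = π.symm i := Fin.ext h
      rw [this]; simp
  calc ((Finset.range t).filter (fun s => sched s = i)).card
      ≤ (Finset.range M).card := by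
        apply Finset.card_le_card_of_injOn (fun s => s / k)
        · intro s hs
          simp only [Finset.mem_coe, Finset.mem_filter, Finset.mem_range] at hs
          simp only [Finset.mem_coe, Finset.mem_range]
          refine Nat.div_lt_of_lt_mul ?_
          calc s < t := hs.1
            _ ≤ M * k := ht
            _ = k * M := Nat.mul_comm M k
        · intro s1 h1 s2 h2 hdiv
          simp only [Finset.mem_coe, Finset.mem_filter, Finset.mem_range, key] at h1 h2
          have hd : s1 / k = s2 / k := hdiv
          calc s1 = k * (s1 / k) + s1 % k := (Nat.div_add_mod s1 k).symm
            _ = k * (s2 / k) + s2 % k := by rw [hd, h1.2, h2.2]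
            _ = s2 := Nat.div_add_mod s2 k
    _ = M := Finset.card_range M

/-- for every `n ≥ 6`, every deterministic algorithm `A`, every
Round Robin scheduler and every choice of the adversary, if the execution of `A`
from the initial configuration in which all `n` vertices of the `n`-ring are
occupied by exactly one robot each reaches, at round `t`, a configuration where
all robots occupy one common vertex, then at least `⌊n/2⌋` epochs (of `n` rounds
each) elapse before this happens, i.e. `t` lies strictly beyond the first
`⌊n/2⌋ - 1` complete epochs.  Hence any gathering algorithm on rings requires at
least `⌊n/2⌋` epochs in the worst case, so gathering within `n - 3` epochs is
asymptotically time optimal. -/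
theorem stmt18 (n : ℕ) (hn : 6 ≤ n) (A : Algo n)
    (C₀ : Config n n) (hC₀ : Function.Bijective C₀)
    (sched : ℕ → Fin n) (hRR : IsRoundRobin sched) (env : ℕ → Bool)
    (t : ℕ)
    (hg : ∀ i j : Fin n, exec A C₀ sched env t i = exec A C₀ sched env t j) :
    (n / 2 - 1) * n < t := by
  obtain ⟨π, hπ⟩ := hRR
  by_contra hcon
  push_neg at hcon
  haveI : NeZero n := ⟨by omega⟩
  have hn1 : 1 < n := by omega
  set c : ZMod n := ((n / 2 : ℕ) : ZMod n) with hc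
  set i0 : Fin n := ⟨0, by omega⟩ with hi0
  set g : ZMod n := exec A C₀ sched env t i0 with hgdef
  obtain ⟨i, hi⟩ := hC₀.2 (g + c)
  have hEti : exec A C₀ sched env t i = g := hg i i0
  have hval : c.val = n / 2 := by
    rw [hc, ZMod.val_natCast, Nat.mod_eq_of_lt (by omega)]
  have hc0 : c ≠ 0 := by
    intro h
    rw [h, ZMod.val_zero] at hval
    omega
  have hnegval : (-c).val = n - n / 2 := by rw [ZMod.neg_val, if_neg hc0, hval]
  have hdist : ringDist (C₀ i) (exec A C₀ sched env t i) = n / 2 := by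
    rw [hi, hEti]
    unfold ringDist
    rw [show g + c - g = c by ring, show g - (g + c) = -c by ring, hval, hnegval]
    omega
  have h1 := exec_dist hn1 A C₀ sched env i t
  have h2 := count_le (show 0 < n by omega) sched π hπ i (n / 2 - 1) t hcon
  omega

end RobotRing
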